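/- Let λ₁(g) denote the length of the shortest nonzero vector of the unimodular lattice |det g|^{-1/n} ℤⁿ g, for g ∈ GL_n(ℝ). Then λ₁(ᵗg^{-1})^{n-1} ≤ (2^{n-1}/V_{n-1}) λ₁(g), where V_{n-1} is the volume of the (n-1)-dimensional Euclidean unit ball. -/

import Mathlib

open MeasureTheory Matrix

open Module Submodule Finset in
set_option maxHeartbeats 2000000 in
lemma aux_minkowski (m : ℕ) (hm : 0 < m) (A : Matrix (Fin (m+1)) (Fin (m+1)) ℝ)
    (hA : IsUnit A.det)
    (p : Fin (m+1) → ℝ) (hp : p ≠ 0)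
    (hdual : ∀ w : Fin (m+1) → ℤ, ∃ k : ℤ,
      ∑ i, Matrix.vecMul (fun j => (w j : ℝ)) A i * p i = (k : ℝ))
    (r : ℝ) (hr : 0 < r)
    (hvol : |A.det| * 2 ^ (m+1) <
      2 * (Real.sqrt (∑ i, p i ^ 2))⁻¹ * r ^ m *
        (volume (Metric.ball (0 : EuclideanSpace ℝ (Fin m)) 1)).toReal) :
    ∃ w : Fin (m+1) → ℤ, w ≠ 0 ∧
      Real.sqrt (∑ i, (Matrix.vecMul (fun j => (w j : ℝ)) A i) ^ 2) < r := by
  classical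
  haveI : Nonempty (Fin m) := ⟨⟨0, hm⟩⟩
  set ℓ : ℝ := Real.sqrt (∑ i, p i ^ 2) with hldef
  have hpne : p ≠ 0 := hp
  have hsum : 0 < ∑ i, p i ^ 2 := by
    obtain ⟨i0, hi0⟩ := Function.ne_iff.mp hpne
    exact Finset.sum_pos' (fun i _ => sq_nonneg _)
      ⟨i0, Finset.mem_univ _, pow_two_pos_of_ne_zero hi0⟩
  have hl : 0 < ℓ := Real.sqrt_pos.mpr hsum
  set c : ℝ := ℓ⁻¹ with hcdef
  have hc : 0 < c := inv_pos.mpr hl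
  -- `p` as a Euclidean vector and the unit vector `u` along it
  set pE : EuclideanSpace ℝ (Fin (m+1)) := (WithLp.equiv 2 _).symm p with hpEdef
  have hpEnorm : ‖pE‖ = ℓ := by
    rw [EuclideanSpace.norm_eq, hldef]
    congr 1
    refine Finset.sum_congr rfl fun i _ => ?_
    rw [Real.norm_eq_abs, sq_abs]
    rfl
  set u : EuclideanSpace ℝ (Fin (m+1)) := ℓ⁻¹ • pE with hudef
  have hunorm : ‖u‖ = 1 := by
    rw [hudef, norm_smul, hpEnorm, norm_inv, Real.norm_eq_abs, abs_of_pos hl,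
      inv_mul_cancel₀ hl.ne']
  -- orthonormal basis whose first vector is `u`
  obtain ⟨o, ho⟩ : ∃ o : OrthonormalBasis (Fin (m+1)) ℝ (EuclideanSpace ℝ (Fin (m+1))),
      o 0 = u := by
    have hcard : finrank ℝ (EuclideanSpace ℝ (Fin (m+1))) = Fintype.card (Fin (m+1)) := by
      simp [finrank_euclideanSpace]
    have horth : Orthonormal ℝ (({0} : Set (Fin (m+1))).restrict (fun _ => u)) := by
      constructor
      · intro i
        exact hunorm
      · rintro ⟨i, hi⟩ ⟨j, hj⟩ hij
        simp only [Set.mem_singleton_iff] at hi hj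
        exact absurd (Subtype.ext (hi.trans hj.symm)) hij
    obtain ⟨b, hb⟩ := horth.exists_orthonormalBasis_extension_of_card_eq hcard
    exact ⟨b, hb 0 rfl⟩
  -- the lattice basis given by the rows of `A`
  have hAT : IsUnit (Aᵀ).det := by rwa [Matrix.det_transpose]
  haveI hinv : Invertible Aᵀ := Aᵀ.invertibleOfIsUnitDet hAT
  set eA : (Fin (m+1) → ℝ) ≃ₗ[ℝ] (Fin (m+1) → ℝ) := Aᵀ.toLinearEquiv' hinv with heAdef
  set eW : (Fin (m+1) → ℝ) ≃ₗ[ℝ] EuclideanSpace ℝ (Fin (m+1)) :=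
    (WithLp.linearEquiv 2 ℝ (Fin (m+1) → ℝ)).symm with heWdef
  have heAapp : ∀ x, eA x = Matrix.vecMul x A := fun x => by
    show Matrix.toLin' Aᵀ x = _
    rw [Matrix.toLin'_apply, Matrix.mulVec_transpose]
  set bp : Basis (Fin (m+1)) ℝ (Fin (m+1) → ℝ) := (Pi.basisFun ℝ (Fin (m+1))).map eA
    with hbpdef
  set b : Basis (Fin (m+1)) ℝ (EuclideanSpace ℝ (Fin (m+1))) := bp.map eW with hbdef
  -- lattice points are the integer row combinations
  have hspan : ∀ x : EuclideanSpace ℝ (Fin (m+1)), x ∈ span ℤ (Set.range b) →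
      ∃ cv : Fin (m+1) → ℤ, x = eW (Matrix.vecMul (fun j => (cv j : ℝ)) A) := by
    intro x hx
    rw [mem_span_range_iff_exists_fun] at hx
    obtain ⟨cv, hcv⟩ := hx
    refine ⟨cv, ?_⟩
    rw [← hcv]
    have hbi : ∀ i, b i = eW (eA (Pi.basisFun ℝ (Fin (m+1)) i)) := by
      intro i
      rw [hbdef, Basis.map_apply, hbpdef, Basis.map_apply]
    have hbase : (∑ i, cv i • Pi.basisFun ℝ (Fin (m+1)) i) = (fun j => (cv j : ℝ)) := by
      funext j
      rw [Finset.sum_apply]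
      simp [Pi.basisFun_apply, Pi.single_apply, Finset.sum_ite_eq']
    calc ∑ i, cv i • b i
        = ∑ i, cv i • eW (eA (Pi.basisFun ℝ (Fin (m+1)) i)) := by simp_rw [hbi]
      _ = eW (eA (∑ i, cv i • Pi.basisFun ℝ (Fin (m+1)) i)) := by
          rw [map_sum, map_sum]
          simp_rw [map_zsmul]
      _ = eW (Matrix.vecMul (fun j => (cv j : ℝ)) A) := by rw [hbase, heAapp]
  -- instances for the lattice
  haveI hzl : IsZLattice ℝ (span ℤ (Set.range b)) := inferInstance
  haveI : Countable (span ℤ (Set.range b)).toAddSubgroup :=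
    inferInstanceAs (Countable (span ℤ (Set.range b)))
  have fund := ZSpan.isAddFundamentalDomain' b volume
  -- volume of the fundamental domain
  have hfundvol : volume (ZSpan.fundamentalDomain b) = ENNReal.ofReal |A.det| := by
    have h1 : ZSpan.fundamentalDomain b
        = ⇑((MeasurableEquiv.toLp 2 (Fin (m+1) → ℝ)).symm) ⁻¹' (ZSpan.fundamentalDomain bp) := by
      rw [hbdef, ← ZSpan.map_fundamentalDomain]
      ext x
      constructor
      · rintro ⟨y, hy, rfl⟩
        exact hy
      · intro hx
        exact ⟨((MeasurableEquiv.toLp 2 (Fin (m+1) → ℝ)).symm) x, hx, rfl⟩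
    rw [h1, (EuclideanSpace.volume_preserving_symm_measurableEquiv_toLp (Fin (m+1))).measure_preimage
      (ZSpan.fundamentalDomain_measurableSet bp).nullMeasurableSet,
      ZSpan.volume_fundamentalDomain]
    congr 2
    have hMA : (Matrix.of ⇑bp) = A := by
      ext i j
      show bp i j = A i j
      rw [hbpdef, Basis.map_apply, heAapp]
      simp [Matrix.vecMul, dotProduct, Pi.basisFun_apply, Pi.single_apply,
        Finset.sum_ite_eq]
    rw [hMA]
  -- the cylinder
  set L1 : EuclideanSpace ℝ (Fin (m+1)) →ₗ[ℝ] ℝ :=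
    (LinearMap.proj 0).comp (WithLp.linearEquiv 2 ℝ (Fin (m+1) → ℝ)).toLinearMap with hL1def
  set L2 : EuclideanSpace ℝ (Fin (m+1)) →ₗ[ℝ] EuclideanSpace ℝ (Fin m) :=
    ((WithLp.linearEquiv 2 ℝ (Fin m → ℝ)).symm.toLinearMap.comp
      ((LinearMap.funLeft ℝ ℝ Fin.succ).comp
        (WithLp.linearEquiv 2 ℝ (Fin (m+1) → ℝ)).toLinearMap)) with hL2def
  set T : EuclideanSpace ℝ (Fin (m+1)) →ₗ[ℝ] ℝ × EuclideanSpace ℝ (Fin m) :=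
    (LinearMap.prod L1 L2).comp (o.repr.toLinearEquiv : _ ≃ₗ[ℝ] _).toLinearMap with hTdef
  have hTapp : ∀ x, T x = ((o.repr x) 0,
      (WithLp.equiv 2 (Fin m → ℝ)).symm (fun j => (o.repr x) j.succ)) := fun x => rfl
  set U : Set (ℝ × EuclideanSpace ℝ (Fin m)) :=
    Set.Ioo (-c) c ×ˢ Metric.ball 0 r with hUdef
  set s : Set (EuclideanSpace ℝ (Fin (m+1))) := T ⁻¹' U with hsdef
  have hTcont : Continuous T := T.continuous_of_finiteDimensional
  have hUopen : IsOpen U := (isOpen_Ioo).prod Metric.isOpen_ball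
  have hsopen : IsOpen s := hUopen.preimage hTcont
  have hconv : Convex ℝ s := ((convex_Ioo _ _).prod (convex_ball _ _)).linear_preimage T
  have hsym : ∀ x ∈ s, -x ∈ s := by
    intro x hx
    rw [hsdef, Set.mem_preimage] at hx
    rw [hsdef, Set.mem_preimage, T.map_neg]
    obtain ⟨h1, h2⟩ := hx
    constructor
    · simp only [Prod.fst_neg, Set.mem_Ioo] at h1 ⊢
      constructor <;> [linarith [h1.2]; linarith [h1.1]]
    · simp only [Prod.snd_neg, mem_ball_zero_iff, norm_neg] at h2 ⊢
      exact h2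
  -- volume of the cylinder
  have hBpi_open : IsOpen {z : Fin m → ℝ | ∑ j, z j ^ 2 < r ^ 2} := by
    have : Continuous fun z : Fin m → ℝ => ∑ j, z j ^ 2 := by
      apply continuous_finset_sum
      intro j _
      exact (continuous_apply j).pow 2
    exact isOpen_lt this continuous_const
  have hball_eq : Metric.ball (0 : EuclideanSpace ℝ (Fin m)) r
      = ⇑((MeasurableEquiv.toLp 2 (Fin m → ℝ)).symm) ⁻¹' {z : Fin m → ℝ | ∑ j, z j ^ 2 < r ^ 2} := by
    ext z
    rw [mem_ball_zero_iff, EuclideanSpace.norm_eq, Set.mem_preimage, Set.mem_setOf_eq,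
      Real.sqrt_lt' hr]
    constructor <;> intro h <;> [skip; skip] <;>
      · convert h using 2 with j
        · rw [Real.norm_eq_abs, sq_abs]; rfl
  -- transfer the volume of s
  set Bpi : Set (Fin m → ℝ) := {z : Fin m → ℝ | ∑ j, z j ^ 2 < r ^ 2} with hBpidef
  have hBr : volume (Metric.ball (0 : EuclideanSpace ℝ (Fin m)) r)
      = ENNReal.ofReal (r ^ m) * volume (Metric.ball (0 : EuclideanSpace ℝ (Fin m)) 1) := by
    rw [Measure.addHaar_ball volume (0 : EuclideanSpace ℝ (Fin m)) hr.le,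
      finrank_euclideanSpace_fin]
  have hBpi_vol : volume Bpi = volume (Metric.ball (0 : EuclideanSpace ℝ (Fin m)) r) := by
    rw [hball_eq, (EuclideanSpace.volume_preserving_symm_measurableEquiv_toLp (Fin m)).measure_preimage
      hBpi_open.measurableSet.nullMeasurableSet]
  set e3 := MeasurableEquiv.piFinSuccAbove (fun _ : Fin (m+1) => ℝ) 0 with he3def
  set s₃ : Set (Fin (m+1) → ℝ) := ⇑e3 ⁻¹' (Set.Ioo (-c) c ×ˢ Bpi) with hs3def
  have hUmeas : MeasurableSet (Set.Ioo (-c) c ×ˢ Bpi) :=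
    measurableSet_Ioo.prod hBpi_open.measurableSet
  have hs3vol : volume s₃ = ENNReal.ofReal (2 * c) * volume Bpi := by
    rw [hs3def, (volume_preserving_piFinSuccAbove (fun _ : Fin (m+1) => ℝ) 0).measure_preimage
      hUmeas.nullMeasurableSet, Measure.volume_eq_prod, Measure.prod_prod, Real.volume_Ioo]
    congr 2
    ring
  have hs_eq : s = ⇑(o.repr) ⁻¹'
      (⇑((MeasurableEquiv.toLp 2 (Fin (m+1) → ℝ)).symm) ⁻¹' s₃) := by
    ext x
    rw [hsdef, Set.mem_preimage, Set.mem_preimage, Set.mem_preimage, hTapp, hs3def,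
      Set.mem_preimage, hUdef, Set.mem_prod, Set.mem_prod]
    have hnorm : ∀ (y : Fin m → ℝ),
        (∑ i, ‖((WithLp.equiv 2 (Fin m → ℝ)).symm y) i‖ ^ 2) = ∑ i, y i ^ 2 :=
      fun y => Finset.sum_congr rfl fun i _ => by rw [Real.norm_eq_abs, sq_abs]; rfl
    constructor
    · rintro ⟨h1, h2⟩
      refine ⟨h1, ?_⟩
      rw [mem_ball_zero_iff, EuclideanSpace.norm_eq, Real.sqrt_lt' hr, hnorm] at h2
      exact h2
    · rintro ⟨h1, h2⟩
      refine ⟨h1, ?_⟩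
      rw [mem_ball_zero_iff, EuclideanSpace.norm_eq, Real.sqrt_lt' hr, hnorm]
      exact h2
  have hψmeas : MeasurableSet s₃ := e3.measurable hUmeas
  have hsvol : volume s = ENNReal.ofReal (2 * c) *
      (ENNReal.ofReal (r ^ m) * volume (Metric.ball (0 : EuclideanSpace ℝ (Fin m)) 1)) := by
    rw [hs_eq,
      (LinearIsometryEquiv.measurePreserving o.repr).measure_preimage
        (((MeasurableEquiv.toLp 2 (Fin (m+1) → ℝ)).symm).measurable hψmeas).nullMeasurableSet,
      (EuclideanSpace.volume_preserving_symm_measurableEquiv_toLp (Fin (m+1))).measure_preimage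
        hψmeas.nullMeasurableSet,
      hs3vol, hBpi_vol, hBr]
  -- the Minkowski condition
  have hVne : volume (Metric.ball (0 : EuclideanSpace ℝ (Fin m)) 1) ≠ ⊤ :=
    measure_ball_lt_top.ne
  set Vm := (volume (Metric.ball (0 : EuclideanSpace ℝ (Fin m)) 1)).toReal with hVmdef
  have hV : 0 < Vm :=
    ENNReal.toReal_pos (Metric.measure_ball_pos volume _ one_pos).ne' hVne
  have hcond : volume (ZSpan.fundamentalDomain b)
      * 2 ^ (finrank ℝ (EuclideanSpace ℝ (Fin (m+1)))) < volume s := by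
    rw [hfundvol, hsvol, finrank_euclideanSpace_fin, ← ENNReal.ofReal_toReal hVne, ← hVmdef]
    have hrpos : 0 < r ^ m := pow_pos hr m
    calc ENNReal.ofReal |A.det| * 2 ^ (m+1)
        = ENNReal.ofReal (|A.det| * 2 ^ (m+1)) := by
          rw [ENNReal.ofReal_mul (abs_nonneg _), ENNReal.ofReal_pow (by norm_num : (0:ℝ) ≤ 2)]
          norm_num
      _ < ENNReal.ofReal (2 * c * (r ^ m * Vm)) := by
          rw [ENNReal.ofReal_lt_ofReal_iff
            (by exact mul_pos (mul_pos two_pos hc) (mul_pos hrpos hV))]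
          calc |A.det| * 2 ^ (m+1) < 2 * c * r ^ m * Vm := hvol
            _ = 2 * c * (r ^ m * Vm) := by ring
      _ = ENNReal.ofReal (2 * c) * (ENNReal.ofReal (r ^ m) * ENNReal.ofReal Vm) := by
          rw [ENNReal.ofReal_mul (by exact mul_nonneg two_pos.le hc.le),
            ENNReal.ofReal_mul hrpos.le]
  obtain ⟨x, hx0, hxs⟩ :=
    exists_ne_zero_mem_lattice_of_measure_mul_two_pow_lt_measure fund hsym hconv hcond
  have hxmem : (x : EuclideanSpace ℝ (Fin (m+1))) ∈ span ℤ (Set.range ⇑b) := x.2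
  obtain ⟨cv, hcv⟩ := hspan _ hxmem
  refine ⟨cv, ?_, ?_⟩
  · intro h0
    apply hx0
    have : (x : EuclideanSpace ℝ (Fin (m+1))) = 0 := by
      rw [hcv, h0]
      have : (fun j => ((0 : Fin (m+1) → ℤ) j : ℝ)) = (0 : Fin (m+1) → ℝ) := by
        funext j; simp
      rw [this, Matrix.zero_vecMul, map_zero]
    exact Subtype.ext this
  · -- pairing with p is an integer
    obtain ⟨k, hk⟩ := hdual cv
    set y : Fin (m+1) → ℝ := Matrix.vecMul (fun j => (cv j : ℝ)) A with hydef
    have hxy : (x : EuclideanSpace ℝ (Fin (m+1))) = eW y := hcv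
    have hinner : inner (𝕜 := ℝ) u (x : EuclideanSpace ℝ (Fin (m+1))) = ℓ⁻¹ * (k : ℝ) := by
      rw [hudef, real_inner_smul_left]
      congr 1
      rw [hxy, PiLp.inner_apply]
      rw [← hk]
      refine Finset.sum_congr rfl fun i _ => ?_
      have h1 : (pE : EuclideanSpace ℝ (Fin (m+1))) i = p i := rfl
      have h2 : (eW y : EuclideanSpace ℝ (Fin (m+1))) i = y i := rfl
      rw [h1, h2, RCLike.inner_apply, conj_trivial, mul_comm]
    -- the first coordinate of x in the basis o
    have hrepr0 : (o.repr (x : EuclideanSpace ℝ (Fin (m+1)))) 0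
        = inner (𝕜 := ℝ) u (x : EuclideanSpace ℝ (Fin (m+1))) := by
      rw [← ho]
      exact o.repr_apply_apply _ _
    -- the membership conditions
    rw [hsdef, Set.mem_preimage, hTapp, hUdef, Set.mem_prod] at hxs
    obtain ⟨h1, h2⟩ := hxs
    simp only [Set.mem_Ioo] at h1
    -- k = 0
    have hk0 : k = 0 := by
      have habs : |ℓ⁻¹ * (k : ℝ)| < c := by
        rw [← hinner, ← hrepr0]
        exact abs_lt.mpr ⟨h1.1, h1.2⟩
      rw [abs_mul, abs_of_pos (inv_pos.mpr hl), hcdef] at habs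
      have : |(k : ℝ)| < 1 := by
        by_contra hcon
        push_neg at hcon
        nlinarith [inv_pos.mpr hl]
      have : |k| < 1 := by exact_mod_cast (by rwa [← Int.cast_abs] at this : ((|k| : ℤ) : ℝ) < 1)
      have := abs_lt.mp this
      omega
    have h0coord : (o.repr (x : EuclideanSpace ℝ (Fin (m+1)))) 0 = 0 := by
      rw [hrepr0, hinner, hk0]
      simp
    -- the norm bound
    have hxnorm : Real.sqrt (∑ i, (Matrix.vecMul (fun j => (cv j : ℝ)) A i) ^ 2)
        = ‖(x : EuclideanSpace ℝ (Fin (m+1)))‖ := by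
      rw [hxy, EuclideanSpace.norm_eq]
      congr 1
      refine Finset.sum_congr rfl fun i _ => ?_
      rw [Real.norm_eq_abs, sq_abs]
      rfl
    rw [hxnorm, ← o.repr.norm_map, EuclideanSpace.norm_eq]
    have hsplit : ∑ i, ‖(o.repr (x : EuclideanSpace ℝ (Fin (m+1)))) i‖ ^ 2
        = ∑ j : Fin m, (o.repr (x : EuclideanSpace ℝ (Fin (m+1)))) j.succ ^ 2 := by
      rw [Fin.sum_univ_succ]
      have : ∀ i, ‖(o.repr (x : EuclideanSpace ℝ (Fin (m+1)))) i‖ ^ 2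
          = (o.repr (x : EuclideanSpace ℝ (Fin (m+1)))) i ^ 2 := fun i => by
        rw [Real.norm_eq_abs, sq_abs]
      simp_rw [this]
      rw [h0coord]
      norm_num
    rw [hsplit]
    -- h2 gives exactly this bound
    rw [mem_ball_zero_iff, EuclideanSpace.norm_eq] at h2
    have hnorm2 : ∑ i, ‖((WithLp.equiv 2 (Fin m → ℝ)).symm
        fun j => (o.repr (x : EuclideanSpace ℝ (Fin (m+1)))) j.succ) i‖ ^ 2
        = ∑ j : Fin m, (o.repr (x : EuclideanSpace ℝ (Fin (m+1)))) j.succ ^ 2 :=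
      Finset.sum_congr rfl fun i _ => by rw [Real.norm_eq_abs, sq_abs]; rfl
    rw [hnorm2] at h2
    exact h2

theorem stmt7 (n : ℕ) (hn : 2 ≤ n) (g : Matrix (Fin n) (Fin n) ℝ) (hg : IsUnit g.det)
    (lam : Matrix (Fin n) (Fin n) ℝ → ℝ)
    (hlam : ∀ M : Matrix (Fin n) (Fin n) ℝ, IsUnit M.det →
      IsLeast {r : ℝ | ∃ v : Fin n → ℤ, v ≠ 0 ∧
        r = |M.det| ^ (-(1 : ℝ) / n) *
          Real.sqrt (∑ i, (Matrix.vecMul (fun j => (v j : ℝ)) M i) ^ 2)} (lam M)) :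
    lam ((g⁻¹).transpose) ^ (n - 1)
      ≤ 2 ^ (n - 1) /
          (volume (Metric.ball (0 : EuclideanSpace ℝ (Fin (n - 1))) 1)).toReal *
        lam g := by
  obtain ⟨m, rfl⟩ : ∃ m, n = m + 1 := ⟨n - 1, by omega⟩
  have hm : 0 < m := by omega
  simp only [Nat.add_sub_cancel]
  set A := (g⁻¹).transpose with hAdef
  have hgdet : g.det ≠ 0 := by
    intro h; rw [h] at hg; exact (by simpa using hg : IsUnit (0:ℝ)).ne_zero rfl
  have hA : IsUnit A.det := by
    rw [hAdef, Matrix.det_transpose]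
    exact Matrix.isUnit_nonsing_inv_det g hg
  set d : ℝ := |g.det| with hd_def
  have hd : 0 < d := abs_pos.mpr hgdet
  have hAdet : |A.det| = d⁻¹ := by
    rw [hAdef, Matrix.det_transpose, Matrix.det_nonsing_inv, Ring.inverse_eq_inv', abs_inv]
  -- shortest vector of the lattice of `g`
  obtain ⟨v, hv, hvg⟩ := (hlam g hg).1
  set p : Fin (m+1) → ℝ := Matrix.vecMul (fun j => (v j : ℝ)) g with hpdef
  set ℓ : ℝ := Real.sqrt (∑ i, p i ^ 2) with hldef
  have hpne : p ≠ 0 := by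
    intro h
    rw [hpdef] at h
    apply hv
    have h2 : Matrix.vecMul (Matrix.vecMul (fun j => (v j : ℝ)) g) g⁻¹ = 0 := by
      rw [h]; simp [Matrix.zero_vecMul]
    rw [Matrix.vecMul_vecMul, Matrix.mul_nonsing_inv g hg, Matrix.vecMul_one] at h2
    funext j
    have h3 := congrFun h2 j
    simp only [Pi.zero_apply] at h3
    exact_mod_cast h3
  have hsum : 0 < ∑ i, p i ^ 2 := by
    obtain ⟨i0, hi0⟩ := Function.ne_iff.mp hpne
    exact Finset.sum_pos' (fun i _ => sq_nonneg _)
      ⟨i0, Finset.mem_univ _, pow_two_pos_of_ne_zero hi0⟩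
  have hl : 0 < ℓ := Real.sqrt_pos.mpr hsum
  set Vm : ℝ := (volume (Metric.ball (0 : EuclideanSpace ℝ (Fin m)) 1)).toReal with hVmdef
  haveI : Nonempty (Fin m) := ⟨⟨0, hm⟩⟩
  have hVball : volume (Metric.ball (0 : EuclideanSpace ℝ (Fin m)) 1) ≠ ⊤ :=
    measure_ball_lt_top.ne
  have hV : 0 < Vm := ENNReal.toReal_pos (Metric.measure_ball_pos volume _ one_pos).ne' hVball
  set t : ℝ := d ^ ((1:ℝ)/(m+1)) with htdef
  have ht : 0 < t := Real.rpow_pos_of_pos hd _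
  set C : ℝ := t ^ m with hCdef
  have hC : 0 < C := pow_pos ht m
  set R0 : ℝ := 2 ^ m * ℓ / (d * Vm) with hR0def
  have hR0 : 0 < R0 := div_pos (mul_pos (pow_pos two_pos m) hl) (mul_pos hd hV)
  have hlamg : lam g = d ^ (-(1:ℝ)/(((m+1:ℕ)):ℝ)) * ℓ := by
    rw [hvg, hldef, hpdef]
  have hexp : t * d⁻¹ ^ ((1:ℝ)/(m+1)) = 1 := by
    rw [htdef, ← Real.mul_rpow hd.le (inv_nonneg.mpr hd.le), mul_inv_cancel₀ hd.ne',
      Real.one_rpow]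
  have hCd : C * d⁻¹ = d ^ (-(1:ℝ)/(((m+1:ℕ)):ℝ)) := by
    rw [hCdef, htdef, ← Real.rpow_natCast (d ^ ((1:ℝ)/(m+1))) m, ← Real.rpow_mul hd.le,
      ← Real.rpow_neg_one d, ← Real.rpow_add hd]
    push_cast
    congr 1
    have h0 : ((m:ℝ)+1) ≠ 0 := by positivity
    field_simp
    ring
  have hKey : C * R0 = 2 ^ m / Vm * lam g := by
    rw [hlamg, hR0def, ← hCd]
    field_simp
  -- it suffices to beat the bound by every ε
  refine le_of_forall_pos_le_add fun ε hε => ?_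
  set δ : ℝ := ε / C with hδdef
  have hδ : 0 < δ := div_pos hε hC
  set r : ℝ := (R0 + δ) ^ ((m:ℝ)⁻¹) with hrdef
  have hr : 0 < r := Real.rpow_pos_of_pos (add_pos hR0 hδ) _
  have hrm : r ^ m = R0 + δ :=
    Real.rpow_inv_natCast_pow (add_pos hR0 hδ).le (by omega)
  have hdual : ∀ w : Fin (m+1) → ℤ, ∃ k : ℤ,
      ∑ i, Matrix.vecMul (fun j => (w j : ℝ)) A i * p i = (k : ℝ) := by
    intro w
    refine ⟨∑ i, w i * v i, ?_⟩
    have hAg : A * gᵀ = 1 := by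
      rw [hAdef, ← Matrix.transpose_mul, Matrix.mul_nonsing_inv g hg, Matrix.transpose_one]
    have h1 : ∑ i, Matrix.vecMul (fun j => (w j : ℝ)) A i * p i
        = dotProduct (Matrix.vecMul (fun j => (w j : ℝ)) A)
            (Matrix.vecMul (fun j => (v j : ℝ)) g) := by
      rw [hpdef]; simp only [dotProduct]
    rw [h1, ← Matrix.mulVec_transpose g, dotProduct_mulVec,
      Matrix.vecMul_vecMul, hAg, Matrix.vecMul_one]
    simp only [dotProduct]
    push_cast
    rfl
  have hvolhyp : |A.det| * 2 ^ (m+1) < 2 * ℓ⁻¹ * r ^ m * Vm := by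
    rw [hAdet, hrm]
    have he1 : 2 * ℓ⁻¹ * R0 * Vm = d⁻¹ * 2 ^ (m+1) := by
      rw [hR0def]; field_simp; ring
    nlinarith [mul_pos (mul_pos (mul_pos two_pos (inv_pos.mpr hl)) hδ) hV]
  obtain ⟨w, hw, hwr⟩ := aux_minkowski m hm A hA p hpne hdual r hr hvolhyp
  set ρ : ℝ := Real.sqrt (∑ i, (Matrix.vecMul (fun j => (w j : ℝ)) A i) ^ 2) with hρdef
  have hρ0 : 0 ≤ ρ := Real.sqrt_nonneg _
  have hlamA_le : lam A ≤ |A.det| ^ (-(1:ℝ)/(((m+1:ℕ)):ℝ)) * ρ :=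
    (hlam A hA).2 ⟨w, hw, by rw [hρdef]⟩
  have hcoef : |A.det| ^ (-(1:ℝ)/(((m+1:ℕ)):ℝ)) = t := by
    rw [hAdet, htdef, Real.inv_rpow hd.le, ← Real.rpow_neg hd.le]
    push_cast
    congr 1
    ring
  have hlamA_nonneg : 0 ≤ lam A := by
    obtain ⟨w', hw', h'⟩ := (hlam A hA).1
    rw [h']
    exact mul_nonneg (Real.rpow_nonneg (abs_nonneg _) _) (Real.sqrt_nonneg _)
  have step1 : lam A ^ m ≤ (t * ρ) ^ m := by
    apply pow_le_pow_left₀ hlamA_nonneg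
    rw [← hcoef]; exact hlamA_le
  have step2 : (t * ρ) ^ m ≤ C * (R0 + δ) := by
    rw [mul_pow, ← hCdef, ← hrm]
    exact mul_le_mul_of_nonneg_left (pow_le_pow_left₀ hρ0 hwr.le m) hC.le
  calc lam A ^ m ≤ C * (R0 + δ) := step1.trans step2
    _ = C * R0 + ε := by rw [hδdef, mul_add, mul_div_cancel₀ _ hC.ne']
    _ = 2 ^ m / Vm * lam g + ε := by rw [hKey]
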